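/- Let K be a finite extension of ℚ_p, and let f(t) = t^m + A t^n + B ∈ K[t] be a trinomial (m > n > 0, B ≠ 0) whose roots in K take exactly two absolute values a > b. Then for any two roots x₁, x₂ with |x₁|_p = |x₂|_p = b one has |1 − (x₂/x₁)^n|_p ≤ (b/a)^{m−n}. -/

import Mathlib

/-- If the roots in a finite extension `K/ℚ_p` of a trinomial `t^m + A t^n + B`
take exactly two absolute values `a > b`, then for any two roots of absolute value `b`
one has `|1 − (x₂/x₁)^n|_p ≤ (b/a)^{m−n}`. -/
theorem trinomial_padic_small_roots_close
    (p : ℕ) [Fact p.Prime] (K : Type*) [NormedField K] [IsUltrametricDist K]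
    [Algebra ℚ_[p] K] [FiniteDimensional ℚ_[p] K]
    (hext : ∀ q : ℚ_[p], ‖algebraMap ℚ_[p] K q‖ = ‖q‖)
    (m n : ℕ) (A B : K) (hmn : n < m) (hn : 0 < n) (hB : B ≠ 0)
    (a b : ℝ) (hab : b < a)
    (hvals : ∀ x : K, x ^ m + A * x ^ n + B = 0 → ‖x‖ = a ∨ ‖x‖ = b)
    (hexa : ∃ x : K, x ^ m + A * x ^ n + B = 0 ∧ ‖x‖ = a)
    (hexb : ∃ x : K, x ^ m + A * x ^ n + B = 0 ∧ ‖x‖ = b)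
    (x₁ x₂ : K)
    (h₁ : x₁ ^ m + A * x₁ ^ n + B = 0)
    (h₂ : x₂ ^ m + A * x₂ ^ n + B = 0)
    (hn₁ : ‖x₁‖ = b) (hn₂ : ‖x₂‖ = b) :
    ‖1 - (x₂ / x₁) ^ n‖ ≤ (b / a) ^ (m - n) := by
  obtain ⟨x₀, h₀, hn₀⟩ := hexa
  have hm : 0 < m := hn.trans hmn
  have hx₁ : x₁ ≠ 0 := by
    rintro rfl
    exact hB (by simpa [zero_pow hm.ne', zero_pow hn.ne'] using h₁)
  have hb : 0 < b := hn₁ ▸ norm_pos_iff.mpr hx₁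
  have ha : 0 < a := hb.trans hab
  have hmax : ∀ u v : K, ‖u + v‖ ≤ max ‖u‖ ‖v‖ := fun u v =>
    IsUltrametricDist.norm_add_le_max u v
  set α := ‖A‖ with hα
  set β := ‖B‖ with hβ
  have hα0 : 0 ≤ α := norm_nonneg A
  -- fact A : a^m ≤ max (α * a^n) β
  have factA : a ^ m ≤ max (α * a ^ n) β := by
    have e : x₀ ^ m = -(A * x₀ ^ n + B) := by linear_combination h₀
    calc a ^ m = ‖x₀ ^ m‖ := by rw [norm_pow, hn₀]
      _ = ‖A * x₀ ^ n + B‖ := by rw [e, norm_neg]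
      _ ≤ max ‖A * x₀ ^ n‖ ‖B‖ := hmax _ _
      _ = max (α * a ^ n) β := by rw [norm_mul, norm_pow, hn₀]
  -- fact B : α * a^n ≤ max (a^m) β
  have factB : α * a ^ n ≤ max (a ^ m) β := by
    have e : A * x₀ ^ n = -(x₀ ^ m + B) := by linear_combination h₀
    calc α * a ^ n = ‖A * x₀ ^ n‖ := by rw [norm_mul, norm_pow, hn₀]
      _ = ‖x₀ ^ m + B‖ := by rw [e, norm_neg]
      _ ≤ max ‖x₀ ^ m‖ ‖B‖ := hmax _ _
      _ = max (a ^ m) β := by rw [norm_pow, hn₀]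
  -- fact C : β ≤ max (b^m) (α * b^n)
  have factC : β ≤ max (b ^ m) (α * b ^ n) := by
    have e : B = -(x₁ ^ m + A * x₁ ^ n) := by linear_combination h₁
    calc β = ‖x₁ ^ m + A * x₁ ^ n‖ := by rw [hβ, e, norm_neg]
      _ ≤ max ‖x₁ ^ m‖ ‖A * x₁ ^ n‖ := hmax _ _
      _ = max (b ^ m) (α * b ^ n) := by rw [norm_pow, norm_mul, norm_pow, hn₁]
  have hbma : b ^ m < a ^ m := pow_lt_pow_left₀ hab hb.le hm.ne'
  have hbna : b ^ n ≤ a ^ n := pow_le_pow_left₀ hb.le hab.le n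
  -- key : α * a^n = a^m
  have hA : α * a ^ n = a ^ m := by
    rcases lt_trichotomy (α * a ^ n) (a ^ m) with hlt | heq | hgt
    · exfalso
      have h1 : a ^ m ≤ β := by
        rcases le_max_iff.mp factA with h | h
        · linarith
        · exact h
      have h2 : α * b ^ n ≤ α * a ^ n := mul_le_mul_of_nonneg_left hbna hα0
      rcases le_max_iff.mp factC with h | h <;> linarith
    · exact heq
    · exfalso
      have hαpos : 0 < α := by
        rcases hα0.lt_or_eq with h | h
        · exact h
        · exfalso; rw [← h] at hgt; simp at hgt; nlinarith [pow_pos ha m]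
      have h1 : α * a ^ n ≤ β := by
        rcases le_max_iff.mp factB with h | h
        · linarith
        · exact h
      have h2 : α * b ^ n < α * a ^ n :=
        mul_lt_mul_of_pos_left (pow_lt_pow_left₀ hab hb.le hn.ne') hαpos
      rcases le_max_iff.mp factC with h | h <;> linarith
  have hαpos : 0 < α := by
    have := pow_pos ha m
    nlinarith [pow_pos ha n]
  -- from h₁ - h₂ :
  have key : A * (x₁ ^ n - x₂ ^ n) = x₂ ^ m - x₁ ^ m := by linear_combination h₁ - h₂
  have hdiff : α * ‖x₁ ^ n - x₂ ^ n‖ ≤ b ^ m := by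
    calc α * ‖x₁ ^ n - x₂ ^ n‖ = ‖A * (x₁ ^ n - x₂ ^ n)‖ := (norm_mul _ _).symm
      _ = ‖x₂ ^ m + -x₁ ^ m‖ := by rw [key]; ring_nf
      _ ≤ max ‖x₂ ^ m‖ ‖-x₁ ^ m‖ := hmax _ _
      _ = b ^ m := by rw [norm_neg, norm_pow, norm_pow, hn₁, hn₂, max_self]
  have hrw : 1 - (x₂ / x₁) ^ n = (x₁ ^ n - x₂ ^ n) / x₁ ^ n := by
    field_simp
    rw [sub_mul, one_mul, div_pow, div_mul_cancel₀ _ (pow_ne_zero n hx₁)]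
  rw [hrw, norm_div, norm_pow, hn₁, div_pow]
  rw [div_le_div_iff₀ (by positivity) (by positivity)]
  have hbsplit : b ^ (m - n) * b ^ n = b ^ m := by
    rw [← pow_add]; congr 1; omega
  have hasplit : a ^ (m - n) * a ^ n = a ^ m := by
    rw [← pow_add]; congr 1; omega
  -- goal : ‖x₁^n - x₂^n‖ * a^(m-n) ≤ b^(m-n) * b^n
  rw [hbsplit]
  have hαa : α = a ^ (m - n) := by
    have han : (0:ℝ) < a ^ n := pow_pos ha n
    rw [← hasplit] at hA
    exact mul_right_cancel₀ han.ne' hA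
  nlinarith [hdiff, norm_nonneg (x₁ ^ n - x₂ ^ n), pow_pos ha (m - n)]
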